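/- Let A be a p×p integer matrix and B a q×q integer matrix with p+q even. Then A and B are integrally cobordant if and only if they are rationally cobordant. -/

import Mathlib

open Matrix

/-- A square matrix over a commutative ring is *null-cobordant* if its size is even,
say `n = 2 * r`, and it is congruent, via a matrix `P` with unit determinant, to a
block matrix whose upper-left `r × r` block is zero. -/
def Matrix.IsNullCobordant {R : Type*} [CommRing R] {n : ℕ}
    (A : Matrix (Fin n) (Fin n) R) : Prop :=
  ∃ r : ℕ, n = 2 * r ∧ ∃ P : Matrix (Fin n) (Fin n) R, IsUnit P.det ∧
    ∀ i j : Fin n, (i : ℕ) < r → (j : ℕ) < r → (Pᵀ * A * P) i j = 0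

/-- The block sum `A ⊞ B` of square matrices: the block-diagonal matrix `[[A,0],[0,B]]`. -/
def Matrix.blockSum {R : Type*} [CommRing R] {p q : ℕ}
    (A : Matrix (Fin p) (Fin p) R) (B : Matrix (Fin q) (Fin q) R) :
    Matrix (Fin (p + q)) (Fin (p + q)) R :=
  Matrix.reindex finSumFinEquiv finSumFinEquiv (Matrix.fromBlocks A 0 0 B)

lemma aux_conj_apply {R : Type*} [CommRing R] {n : ℕ} (A P : Matrix (Fin n) (Fin n) R)
    (i j : Fin n) : (Pᵀ * A * P) i j = (fun k => P k i) ⬝ᵥ A.mulVec (fun k => P k j) := by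
  simp only [Matrix.mul_apply, Matrix.transpose_apply, dotProduct, Matrix.mulVec,
    Finset.sum_mul, Finset.mul_sum]
  rw [Finset.sum_comm]
  apply Finset.sum_congr rfl
  intro k _
  apply Finset.sum_congr rfl
  intro l _
  ring

lemma aux_span_isotropic {R : Type*} [CommRing R] {n : ℕ} (A : Matrix (Fin n) (Fin n) R)
    (S : Set (Fin n → R)) (h : ∀ u ∈ S, ∀ v ∈ S, u ⬝ᵥ A.mulVec v = 0) :
    ∀ x ∈ Submodule.span R S, ∀ y ∈ Submodule.span R S, x ⬝ᵥ A.mulVec y = 0 := by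
  intro x hx y hy
  induction hx, hy using Submodule.span_induction₂ with
  | mem_mem u v hu hv => exact h u hu v hv
  | zero_left y hy => simp
  | zero_right x hx => simp
  | add_left x y z hx hy hz h1 h2 => simp [add_dotProduct, h1, h2]
  | add_right x y z hx hy hz h1 h2 => simp [Matrix.mulVec_add, dotProduct_add, h1, h2]
  | smul_left r x y hx hy h1 => simp [smul_dotProduct, h1]
  | smul_right r x y hx hy h1 => simp [Matrix.mulVec_smul, dotProduct_smul, h1]

lemma aux_cast_dot {n : ℕ} (A : Matrix (Fin n) (Fin n) ℤ) (x y : Fin n → ℤ) :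
    ((x ⬝ᵥ A.mulVec y : ℤ) : ℚ)
      = (fun k => (x k : ℚ)) ⬝ᵥ (A.map (Int.cast : ℤ → ℚ)).mulVec (fun k => (y k : ℚ)) := by
  simp only [dotProduct, Matrix.mulVec, Matrix.map_apply]
  push_cast
  rfl

lemma aux_int_of_rat {n : ℕ} (A : Matrix (Fin n) (Fin n) ℤ)
    (h : (A.map (Int.cast : ℤ → ℚ)).IsNullCobordant) : A.IsNullCobordant := by
  classical
  obtain ⟨r, hn, P, hPdet, hz⟩ := h
  rcases Nat.eq_zero_or_pos r with rfl | hr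
  · exact ⟨0, hn, 1, by simp, fun i j hi hj => absurd hi (Nat.not_lt_zero _)⟩
  have hrn : r ≤ n := by omega
  -- the first r columns of P
  set v : Fin r → (Fin n → ℚ) := fun i k => P k (Fin.castLE hrn i) with hv
  have hviso : ∀ i j : Fin r, v i ⬝ᵥ (A.map (Int.cast : ℤ → ℚ)).mulVec (v j) = 0 := by
    intro i j
    rw [← aux_conj_apply]
    exact hz _ _ (by simpa using i.2) (by simpa using j.2)
  -- v is linearly independent
  have hvli : LinearIndependent ℚ v := by
    have hcols : LinearIndependent ℚ (fun i => Pᵀ i) :=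
      Matrix.linearIndependent_cols_iff_isUnit.2 ((Matrix.isUnit_iff_isUnit_det P).2 hPdet)
    have := hcols.comp (Fin.castLE hrn) (Fin.castLE_injective hrn)
    convert this using 1
    exact funext fun i => funext fun k => rfl
  -- clear denominators
  obtain ⟨d, hd⟩ := IsLocalization.exist_integer_multiples (nonZeroDivisors ℤ)
    (Finset.univ : Finset (Fin r × Fin n)) (fun p => v p.1 p.2)
  have hd0 : (d : ℤ) ≠ 0 := nonZeroDivisors.coe_ne_zero d
  have hw' : ∀ p : Fin r × Fin n, ∃ a : ℤ, (a : ℚ) = (d : ℤ) • v p.1 p.2 := by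
    intro p
    exact hd p (Finset.mem_univ p)
  choose W hW using hw'
  set w : Fin r → (Fin n → ℤ) := fun i k => W (i, k) with hwdef
  have hw : ∀ i k, ((w i k : ℤ) : ℚ) = (d : ℤ) • v i k := fun i k => hW (i, k)
  have hwq : ∀ i, (fun k => ((w i k : ℤ) : ℚ)) = ((d : ℤ) : ℚ) • v i := by
    intro i; funext k
    rw [hw i k, zsmul_eq_mul, Pi.smul_apply, smul_eq_mul]
  -- isotropy of w over ℤ
  have hwiso : ∀ i j : Fin r, w i ⬝ᵥ A.mulVec (w j) = 0 := by
    intro i j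
    have : ((w i ⬝ᵥ A.mulVec (w j) : ℤ) : ℚ) = 0 := by
      rw [aux_cast_dot, hwq i, hwq j, smul_dotProduct, Matrix.mulVec_smul, dotProduct_smul,
        hviso i j]
      simp
    exact_mod_cast this
  -- linear independence of w over ℤ
  have hwli : LinearIndependent ℤ w := by
    have h1 : LinearIndependent ℤ v := hvli.restrict_scalars (by
      intro x y hxy
      simpa using hxy)
    have h2 : LinearIndependent ℤ (fun i => ((d : ℤ) : ℚ) • v i) := by
      have hd0' : ((d : ℤ) : ℚ) ≠ 0 := by exact_mod_cast hd0
      let G : (Fin n → ℚ) →ₗ[ℤ] (Fin n → ℚ) :=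
        { toFun := fun x => ((d : ℤ) : ℚ) • x
          map_add' := fun x y => smul_add _ x y
          map_smul' := fun c x => smul_comm _ c x }
      have hinj : Function.Injective G := fun x y hxy =>
        smul_right_injective _ hd0' (hxy : ((d : ℤ) : ℚ) • x = ((d : ℤ) : ℚ) • y)
      exact h1.map' G (LinearMap.ker_eq_bot.2 hinj)
    have h3 : LinearIndependent ℤ (fun i => (fun k => ((w i k : ℤ) : ℚ))) := by
      rw [show (fun i => (fun k => ((w i k : ℤ) : ℚ))) = (fun i => ((d : ℤ) : ℚ) • v i)
        from funext fun i => hwq i]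
      exact h2
    let F : (Fin n → ℤ) →ₗ[ℤ] (Fin n → ℚ) :=
      { toFun := fun x k => ((x k : ℤ) : ℚ)
        map_add' := by intro x y; funext k; simp
        map_smul' := by intro c x; funext k; simp [smul_eq_mul] }
    exact LinearIndependent.of_comp F h3
  -- the lattice spanned by the w i
  set L : Submodule ℤ (Fin n → ℤ) := Submodule.span ℤ (Set.range w) with hL
  obtain ⟨m, snf⟩ := Submodule.smithNormalForm (Pi.basisFun ℤ (Fin n)) L
  obtain ⟨bM, bN, f, a, hsnf⟩ := snf
  -- r ≤ m
  have hrm : r ≤ m := by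
    have hmemL : ∀ i, w i ∈ L := fun i => Submodule.subset_span (Set.mem_range_self i)
    have hwL : LinearIndependent ℤ (fun i => (⟨w i, hmemL i⟩ : L)) := by
      apply LinearIndependent.of_comp (L.subtype)
      exact hwli
    haveI : Module.Finite ℤ L := Module.Finite.of_basis bN
    have := hwL.fintype_card_le_finrank
    simpa [Module.finrank_eq_card_basis bN] using this
  -- a permutation of Fin n putting f ∘ castLE first
  set g : Fin r → Fin n := fun i => f (Fin.castLE hrm i) with hg
  have hginj : Function.Injective g :=
    fun i j hij => Fin.castLE_injective hrm (f.injective hij)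
  obtain ⟨τ0, hτ0⟩ := Finset.exists_equiv_extend_of_card_eq
    (α := Fin n) (β := Fin n) (t := Finset.univ) (by simp)
    (s := Finset.univ.filter (fun i : Fin n => (i : ℕ) < r))
    (f := fun i => if h : (i : ℕ) < r then g ⟨i, h⟩ else i)
    (by intro x _; simp)
    (by
      intro x hx y hy hxy
      simp only [Finset.coe_filter, Set.mem_setOf_eq, Finset.mem_univ, true_and] at hx hy
      simp only [dif_pos hx, dif_pos hy] at hxy
      have := hginj hxy
      have h2 : (x : ℕ) = (y : ℕ) := by simpa using this
      exact Fin.ext h2)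
  set τ : Equiv.Perm (Fin n) := τ0.trans (Equiv.subtypeUnivEquiv (by simp)) with hτdef
  have hτ : ∀ (i : Fin n) (hi : (i : ℕ) < r), τ i = g ⟨i, hi⟩ := by
    intro i hi
    have := hτ0 i (by simp [hi])
    simp only [hτdef, Equiv.trans_apply]
    rw [show ((Equiv.subtypeUnivEquiv (by simp : ∀ x : Fin n, x ∈ Finset.univ)) (τ0 i) : Fin n)
      = ((τ0 i : Fin n)) from rfl, this, dif_pos hi]
  -- the new basis and matrix
  set b' : Module.Basis (Fin n) ℤ (Fin n → ℤ) := bM.reindex τ.symm with hb'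
  have hb'apply : ∀ j, b' j = bM (τ j) := by
    intro j; rw [hb', Module.Basis.reindex_apply, Equiv.symm_symm]
  set Q : Matrix (Fin n) (Fin n) ℤ := (Pi.basisFun ℤ (Fin n)).toMatrix ⇑b' with hQ
  have hQapply : ∀ k j, Q k j = b' j k := by
    intro k j
    rw [hQ, Module.Basis.toMatrix_apply]
    simp
  refine ⟨r, hn, Q, ?_, ?_⟩
  · have h1 := Module.Basis.toMatrix_mul_toMatrix_flip (Pi.basisFun ℤ (Fin n)) b'
    exact Matrix.isUnit_det_of_right_inverse h1
  · intro i j hi hj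
    rw [aux_conj_apply]
    have hQi : (fun k => Q k i) = b' i := by funext k; exact hQapply k i
    have hQj : (fun k => Q k j) = b' j := by funext k; exact hQapply k j
    rw [hQi, hQj, hb'apply, hb'apply, hτ i hi, hτ j hj]
    -- now show bM (g ⟨i, hi⟩) ⬝ᵥ A.mulVec (bM (g ⟨j, hj⟩)) = 0
    set ci : Fin m := Fin.castLE hrm ⟨i, hi⟩
    set cj : Fin m := Fin.castLE hrm ⟨j, hj⟩
    have hiso := aux_span_isotropic A (Set.range w)
      (by
        rintro u ⟨i', rfl⟩ v' ⟨j', rfl⟩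
        exact hwiso i' j')
      (bN ci : Fin n → ℤ) (by rw [← hL]; exact (bN ci).2)
      (bN cj : Fin n → ℤ) (by rw [← hL]; exact (bN cj).2)
    rw [hsnf ci, hsnf cj] at hiso
    rw [smul_dotProduct, Matrix.mulVec_smul, dotProduct_smul, smul_eq_mul, smul_eq_mul] at hiso
    have hane : ∀ c : Fin m, a c ≠ 0 := by
      intro c hc
      have h0 : (bN c : Fin n → ℤ) ≠ 0 := by
        simpa [Submodule.coe_eq_zero] using bN.ne_zero c
      rw [hsnf c, hc, zero_smul] at h0
      exact h0 rfl
    have := mul_eq_zero.1 hiso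
    rcases this with h' | h'
    · exact absurd h' (hane ci)
    rcases mul_eq_zero.1 h' with h'' | h''
    · exact absurd h'' (hane cj)
    · exact h''

lemma aux_rat_of_int {n : ℕ} (A : Matrix (Fin n) (Fin n) ℤ)
    (h : A.IsNullCobordant) : (A.map (Int.cast : ℤ → ℚ)).IsNullCobordant := by
  obtain ⟨r, hn, P, hdet, hz⟩ := h
  refine ⟨r, hn, P.map (Int.cast : ℤ → ℚ), ?_, ?_⟩
  · have h := hdet.map (Int.castRingHom ℚ)
    rw [RingHom.map_det] at h
    exact h
  · intro i j hi hj
    have h1 : (P.map (Int.cast : ℤ → ℚ))ᵀ * A.map (Int.cast : ℤ → ℚ) * P.map (Int.cast : ℤ → ℚ)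
        = (Pᵀ * A * P).map (Int.cast : ℤ → ℚ) := by
      show Pᵀ.map ⇑(Int.castRingHom ℚ) * A.map ⇑(Int.castRingHom ℚ)
          * P.map ⇑(Int.castRingHom ℚ) = (Pᵀ * A * P).map ⇑(Int.castRingHom ℚ)
      rw [Matrix.map_mul, Matrix.map_mul]
    rw [h1, Matrix.map_apply, hz i j hi hj, Int.cast_zero]

/-- Two integer matrices (of sizes with even sum) are integrally cobordant if and only if
they are rationally cobordant. -/
theorem int_cobordant_iff_rat_cobordant (p q : ℕ) (hpq : Even (p + q))
    (A : Matrix (Fin p) (Fin p) ℤ) (B : Matrix (Fin q) (Fin q) ℤ) :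
    (A.blockSum (-B)).IsNullCobordant ↔
      ((A.blockSum (-B)).map (Int.cast : ℤ → ℚ)).IsNullCobordant := by
  exact ⟨aux_rat_of_int _, aux_int_of_rat _⟩
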